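/- For any two Haar wavelets on [0,1) at levels j and j' (with m = 2^j and m' = 2^{j'}), the integral of the product of their second iterated antiderivatives satisfies ∫_0^1 p_{2,j,k}(x) · p_{2,j',k'}(x) dx ≤ 1/(16 m² m'²). -/
import Mathlib


open MeasureTheory

/-- The Haar wavelet `h_{j,k}` on `[0, 1)`. -/
noncomputable def haar01 (j k : ℕ) (x : ℝ) : ℝ :=
  if (k : ℝ) / 2 ^ j ≤ x ∧ x < ((k : ℝ) + 1 / 2) / 2 ^ j then 1
  else if ((k : ℝ) + 1 / 2) / 2 ^ j ≤ x ∧ x < ((k : ℝ) + 1) / 2 ^ j then -1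
  else 0

/-- First antiderivative `p_{1,j,k}` of the Haar wavelet on `[0, 1)`. -/
noncomputable def haarP1 (j k : ℕ) (x : ℝ) : ℝ :=
  ∫ t in (0 : ℝ)..x, haar01 j k t

/-- Second iterated antiderivative `p_{2,j,k}` of the Haar wavelet on `[0, 1)`. -/
noncomputable def haarP2 (j k : ℕ) (x : ℝ) : ℝ :=
  ∫ t in (0 : ℝ)..x, haarP1 j k t

namespace HaarAux

open Set

/-- Antiderivative of `fun x => min x a`. -/
noncomputable def G (a x : ℝ) : ℝ := if x ≤ a then x ^ 2 / 2 else a * x - a ^ 2 / 2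

lemma hasDerivAt_sq_half (x : ℝ) : HasDerivAt (fun y : ℝ => y ^ 2 / 2) x x := by
  have := (hasDerivAt_pow 2 x).div_const 2
  norm_num at this
  simpa using this

lemma hasDerivAt_lin (a x : ℝ) : HasDerivAt (fun y : ℝ => a * y - a ^ 2 / 2) a x := by
  simpa using ((hasDerivAt_id x).const_mul a).sub_const (a ^ 2 / 2)

lemma G_eqOn_left (a : ℝ) : EqOn (G a) (fun x => x ^ 2 / 2) (Iic a) := by
  intro x hx; simp [G, (mem_Iic.mp hx)]

lemma G_eqOn_right (a : ℝ) : EqOn (G a) (fun x => a * x - a ^ 2 / 2) (Ici a) := by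
  intro x hx
  rcases eq_or_lt_of_le (mem_Ici.mp hx) with h | h
  · simp only [G, ← h, le_refl, if_pos]
    ring
  · simp [G, not_le.mpr h]

lemma hasDerivAt_G (a x : ℝ) : HasDerivAt (G a) (min x a) x := by
  rcases lt_trichotomy x a with h | h | h
  · have h1 := (hasDerivAt_sq_half x).congr_of_eventuallyEq (f₁ := G a) ?_
    · simpa [min_eq_left h.le] using h1
    · filter_upwards [Iio_mem_nhds h] with y hy
      exact G_eqOn_left a (mem_Iic.mpr (le_of_lt hy))
  · subst h
    have hIic : HasDerivWithinAt (G x) x (Iic x) x :=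
      ((hasDerivAt_sq_half x).hasDerivWithinAt).congr (G_eqOn_left x) (G_eqOn_left x (mem_Iic.mpr le_rfl))
    have hIci : HasDerivWithinAt (G x) x (Ici x) x := by
      have := ((hasDerivAt_lin x x).hasDerivWithinAt).congr (G_eqOn_right x)
        (G_eqOn_right x (mem_Ici.mpr le_rfl))
      exact this
    have := hIic.union hIci
    rw [Iic_union_Ici] at this
    simpa [min_self] using this.hasDerivAt (by simp)
  · have h1 := (hasDerivAt_lin a x).congr_of_eventuallyEq (f₁ := G a) ?_
    · simpa [min_eq_right h.le] using h1
    · filter_upwards [Ioi_mem_nhds h] with y hy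
      exact G_eqOn_right a (mem_Ici.mpr (le_of_lt hy))

lemma continuous_G (a : ℝ) : Continuous (G a) :=
  continuous_iff_continuousAt.mpr fun x => (hasDerivAt_G a x).continuousAt

/-- Closed form of the first antiderivative. -/
noncomputable def P1 (a b c x : ℝ) : ℝ := 2 * min x b - min x a - min x c

/-- Closed form of the second antiderivative. -/
noncomputable def P2 (a b c x : ℝ) : ℝ := 2 * G b x - G a x - G c x

lemma continuous_P1 (a b c : ℝ) : Continuous (P1 a b c) := by
  unfold P1
  exact ((continuous_const.mul (continuous_id.min continuous_const)).sub
    (continuous_id.min continuous_const)).sub (continuous_id.min continuous_const)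

lemma continuous_P2 (a b c : ℝ) : Continuous (P2 a b c) := by
  unfold P2
  exact ((continuous_const.mul (continuous_G b)).sub (continuous_G a)).sub (continuous_G c)

lemma hasDerivAt_P2 (a b c x : ℝ) : HasDerivAt (P2 a b c) (P1 a b c x) x := by
  unfold P2 P1
  exact (((hasDerivAt_G b x).const_mul 2).sub (hasDerivAt_G a x)).sub (hasDerivAt_G c x)

lemma hasDerivWithinAt_min_right (a t : ℝ) :
    HasDerivWithinAt (fun y => min y a) (if t < a then 1 else 0) (Set.Ioi t) t := by
  by_cases h : t < a
  · rw [if_pos h]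
    refine ((hasDerivAt_id t).hasDerivWithinAt).congr_of_eventuallyEq ?_ (min_eq_left h.le)
    filter_upwards [nhdsWithin_le_nhds (Iio_mem_nhds h)] with y hy
    exact min_eq_left (le_of_lt hy)
  · rw [if_neg h]
    push_neg at h
    refine ((hasDerivWithinAt_const t _ a)).congr ?_ (min_eq_right h)
    intro y hy
    exact min_eq_right (h.trans (le_of_lt hy))

lemma hasDerivWithinAt_P1 (a b c t : ℝ) :
    HasDerivWithinAt (P1 a b c)
      (2 * (if t < b then (1 : ℝ) else 0) - (if t < a then 1 else 0)
        - (if t < c then 1 else 0)) (Set.Ioi t) t := by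
  unfold P1
  exact (((hasDerivWithinAt_min_right b t).const_mul 2).sub
    (hasDerivWithinAt_min_right a t)).sub (hasDerivWithinAt_min_right c t)

lemma rhs_cases (a b c t : ℝ) (hab : a ≤ b) (hbc : b ≤ c) :
    (if a ≤ t ∧ t < b then (1 : ℝ) else if b ≤ t ∧ t < c then -1 else 0)
      = 2 * (if t < b then (1 : ℝ) else 0) - (if t < a then 1 else 0)
        - (if t < c then 1 else 0) := by
  rcases lt_or_ge t a with h1 | h1
  · rw [if_neg (fun h => absurd h.1 (not_le.mpr h1)),
      if_neg (fun h => absurd h.1 (not_le.mpr (h1.trans_le hab))),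
      if_pos (h1.trans_le hab), if_pos h1, if_pos (h1.trans_le (hab.trans hbc))]
    norm_num
  · rcases lt_or_ge t b with h2 | h2
    · rw [if_pos ⟨h1, h2⟩, if_pos h2, if_neg (not_lt.mpr h1), if_pos (h2.trans_le hbc)]
      norm_num
    · rcases lt_or_ge t c with h3 | h3
      · rw [if_neg (fun h => absurd h.2 (not_lt.mpr h2)), if_pos ⟨h2, h3⟩,
          if_neg (not_lt.mpr h2), if_neg (not_lt.mpr (hab.trans h2)), if_pos h3]
        norm_num
      · rw [if_neg (fun h => absurd h.2 (not_lt.mpr h2)),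
          if_neg (fun h => absurd h.2 (not_lt.mpr h3)), if_neg (not_lt.mpr h2),
          if_neg (not_lt.mpr (hab.trans h2)), if_neg (not_lt.mpr h3)]
        norm_num

set_option maxHeartbeats 1000000 in
lemma P2_bounds (a b c : ℝ) (hab : a ≤ b) (hbc : b ≤ c) (hsym : c - b = b - a) (x : ℝ) :
    0 ≤ P2 a b c x ∧ P2 a b c x ≤ (b - a) ^ 2 := by
  unfold P2 G
  split_ifs <;> constructor <;>
    nlinarith [sq_nonneg (x - a), sq_nonneg (x - b), sq_nonneg (x - c), sq_nonneg (c - x),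
      sq_nonneg (b - a), sq_nonneg (b - x)]

lemma measurable_haar01 (j k : ℕ) : Measurable (haar01 j k) := by
  unfold haar01
  refine Measurable.ite ?_ measurable_const
    (Measurable.ite ?_ measurable_const measurable_const)
  · exact measurableSet_Ico (a := (k : ℝ) / 2 ^ j) (b := ((k : ℝ) + 1 / 2) / 2 ^ j)
  · exact measurableSet_Ico (a := ((k : ℝ) + 1 / 2) / 2 ^ j) (b := ((k : ℝ) + 1) / 2 ^ j)

lemma intervalIntegrable_haar01 (j k : ℕ) (u v : ℝ) :
    IntervalIntegrable (haar01 j k) volume u v := by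
  refine IntervalIntegrable.mono_fun' (g := fun _ => (1 : ℝ)) intervalIntegrable_const
    ((measurable_haar01 j k).aestronglyMeasurable) ?_
  filter_upwards with t
  unfold haar01
  split_ifs <;> simp

lemma haar01_eq (j k : ℕ) (t : ℝ) (hab : (k : ℝ) / 2 ^ j ≤ ((k : ℝ) + 1 / 2) / 2 ^ j)
    (hbc : ((k : ℝ) + 1 / 2) / 2 ^ j ≤ ((k : ℝ) + 1) / 2 ^ j) :
    haar01 j k t = 2 * (if t < ((k : ℝ) + 1 / 2) / 2 ^ j then (1 : ℝ) else 0)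
      - (if t < (k : ℝ) / 2 ^ j then 1 else 0)
      - (if t < ((k : ℝ) + 1) / 2 ^ j then 1 else 0) :=
  rhs_cases _ _ _ t hab hbc

end HaarAux

open HaarAux Set

lemma haar_hab (j k : ℕ) : (k : ℝ) / 2 ^ j ≤ ((k : ℝ) + 1 / 2) / 2 ^ j := by
  have h : (0:ℝ) < 2 ^ j := by positivity
  exact (div_le_div_iff_of_pos_right h).mpr (by linarith)

lemma haar_hbc (j k : ℕ) : ((k : ℝ) + 1 / 2) / 2 ^ j ≤ ((k : ℝ) + 1) / 2 ^ j := by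
  have h : (0:ℝ) < 2 ^ j := by positivity
  exact (div_le_div_iff_of_pos_right h).mpr (by linarith)

lemma haarP1_eq (j k : ℕ) (x : ℝ) (hx : 0 ≤ x) :
    haarP1 j k x
      = P1 ((k : ℝ) / 2 ^ j) (((k : ℝ) + 1 / 2) / 2 ^ j) (((k : ℝ) + 1) / 2 ^ j) x := by
  have key := intervalIntegral.integral_eq_sub_of_hasDeriv_right_of_le hx
    ((continuous_P1 ((k : ℝ) / 2 ^ j) (((k : ℝ) + 1 / 2) / 2 ^ j)
      (((k : ℝ) + 1) / 2 ^ j)).continuousOn)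
    (fun t _ => by
      rw [show haar01 j k t = _ from haar01_eq j k t (haar_hab j k) (haar_hbc j k)]
      exact hasDerivWithinAt_P1 _ _ _ t)
    (intervalIntegrable_haar01 j k 0 x)
  unfold haarP1
  rw [key]
  have h0 : P1 ((k : ℝ) / 2 ^ j) (((k : ℝ) + 1 / 2) / 2 ^ j) (((k : ℝ) + 1) / 2 ^ j) 0 = 0 := by
    unfold P1
    rw [min_eq_left (show (0:ℝ) ≤ ((k : ℝ) + 1 / 2) / 2 ^ j by positivity),
      min_eq_left (show (0:ℝ) ≤ (k : ℝ) / 2 ^ j by positivity),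
      min_eq_left (show (0:ℝ) ≤ ((k : ℝ) + 1) / 2 ^ j by positivity)]
    ring
  rw [h0]
  ring

lemma haarP2_eq (j k : ℕ) (x : ℝ) (hx : 0 ≤ x) :
    haarP2 j k x
      = P2 ((k : ℝ) / 2 ^ j) (((k : ℝ) + 1 / 2) / 2 ^ j) (((k : ℝ) + 1) / 2 ^ j) x := by
  unfold haarP2
  rw [intervalIntegral.integral_congr
    (g := P1 ((k : ℝ) / 2 ^ j) (((k : ℝ) + 1 / 2) / 2 ^ j) (((k : ℝ) + 1) / 2 ^ j))
    (fun t ht => by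
      rw [uIcc_of_le hx] at ht
      exact haarP1_eq j k t ht.1)]
  rw [intervalIntegral.integral_eq_sub_of_hasDerivAt (fun t _ => hasDerivAt_P2 _ _ _ t)
    ((continuous_P1 _ _ _).intervalIntegrable 0 x)]
  have h0 : P2 ((k : ℝ) / 2 ^ j) (((k : ℝ) + 1 / 2) / 2 ^ j) (((k : ℝ) + 1) / 2 ^ j) 0 = 0 := by
    have hG : ∀ d : ℝ, 0 ≤ d → G d 0 = 0 := by
      intro d hd
      simp [G, hd]
    unfold P2
    rw [hG _ (by positivity), hG _ (by positivity), hG _ (by positivity)]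
    ring
  rw [h0]
  ring

theorem haarP2_product_integral_bound (j k j' k' : ℕ) (hk : k < 2 ^ j) (hk' : k' < 2 ^ j') :
    ∫ x in (0 : ℝ)..1, haarP2 j k x * haarP2 j' k' x
      ≤ 1 / (16 * ((2 : ℝ) ^ j) ^ 2 * ((2 : ℝ) ^ j') ^ 2) := by
  set C : ℝ := 1 / (16 * ((2 : ℝ) ^ j) ^ 2 * ((2 : ℝ) ^ j') ^ 2) with hC
  have h2j : (0 : ℝ) < 2 ^ j := by positivity
  have h2j' : (0 : ℝ) < 2 ^ j' := by positivity
  have hsym : ((k : ℝ) + 1) / 2 ^ j - ((k : ℝ) + 1 / 2) / 2 ^ j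
      = ((k : ℝ) + 1 / 2) / 2 ^ j - (k : ℝ) / 2 ^ j := by ring
  have hsym' : ((k' : ℝ) + 1) / 2 ^ j' - ((k' : ℝ) + 1 / 2) / 2 ^ j'
      = ((k' : ℝ) + 1 / 2) / 2 ^ j' - (k' : ℝ) / 2 ^ j' := by ring
  have hEq : EqOn (fun x => haarP2 j k x * haarP2 j' k' x)
      (fun x => P2 ((k : ℝ) / 2 ^ j) (((k : ℝ) + 1 / 2) / 2 ^ j) (((k : ℝ) + 1) / 2 ^ j) x
        * P2 ((k' : ℝ) / 2 ^ j') (((k' : ℝ) + 1 / 2) / 2 ^ j') (((k' : ℝ) + 1) / 2 ^ j') x)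
      (uIcc (0 : ℝ) 1) := by
    intro x hx
    rw [uIcc_of_le (by norm_num : (0:ℝ) ≤ 1)] at hx
    simp only
    rw [haarP2_eq j k x hx.1, haarP2_eq j' k' x hx.1]
  rw [intervalIntegral.integral_congr hEq]
  have hle : ∀ x ∈ Icc (0 : ℝ) 1,
      P2 ((k : ℝ) / 2 ^ j) (((k : ℝ) + 1 / 2) / 2 ^ j) (((k : ℝ) + 1) / 2 ^ j) x
        * P2 ((k' : ℝ) / 2 ^ j') (((k' : ℝ) + 1 / 2) / 2 ^ j') (((k' : ℝ) + 1) / 2 ^ j') x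
      ≤ C := by
    intro x _
    obtain ⟨h1, h2⟩ := P2_bounds _ _ _ (haar_hab j k) (haar_hbc j k) hsym x
    obtain ⟨h1', h2'⟩ := P2_bounds _ _ _ (haar_hab j' k') (haar_hbc j' k') hsym' x
    have hmul := mul_le_mul h2 h2' h1' (sq_nonneg _)
    have heq : (((k : ℝ) + 1 / 2) / 2 ^ j - (k : ℝ) / 2 ^ j) ^ 2
        * (((k' : ℝ) + 1 / 2) / 2 ^ j' - (k' : ℝ) / 2 ^ j') ^ 2 = C := by
      rw [hC]
      field_simp
      ring
    linarith
  have hcont : Continuous (fun x =>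
      P2 ((k : ℝ) / 2 ^ j) (((k : ℝ) + 1 / 2) / 2 ^ j) (((k : ℝ) + 1) / 2 ^ j) x
        * P2 ((k' : ℝ) / 2 ^ j') (((k' : ℝ) + 1 / 2) / 2 ^ j') (((k' : ℝ) + 1) / 2 ^ j') x) :=
    (continuous_P2 _ _ _).mul (continuous_P2 _ _ _)
  have hmono := intervalIntegral.integral_mono_on (by norm_num : (0:ℝ) ≤ 1)
    (hcont.intervalIntegrable 0 1) (intervalIntegrable_const : IntervalIntegrable (fun _ => C) volume 0 1) hle
  have hconst : (∫ _x in (0:ℝ)..1, C) = C := by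
    rw [intervalIntegral.integral_const]
    norm_num
  linarith
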